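/- For every ε > 0 there exist k ∈ ℕ and ε' > 0 such that the following holds: for every nonempty finite set X, every finite collection F of functions X → [−1,1], every measure ν : X → ℝ that is ε'-pseudorandom according to F^k, and every measure g : X → ℝ with g(x) ≤ ν(x) for all x ∈ X, one can write g = g₁ + g₂ where g₁ : X → [0,1] is a bounded measure with E_{x∈X} g₁(x) = E_{x∈X} g(x), and g₂ : X → ℝ satisfies |⟨g₂, f⟩| ≤ ε for every f ∈ F. -/

import Mathlib

/-- Normalized inner product `⟨f,g⟩ = (1/|X|) ∑ₓ f(x) g(x)`. -/
noncomputable def ip (X : Type) [Fintype X] (f g : X → ℝ) : ℝ :=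
  (∑ x, f x * g x) / (Fintype.card X)

/-- Expectation `E_{x∈X} g(x) = (1/|X|) ∑ₓ g(x)`. -/
noncomputable def ex (X : Type) [Fintype X] (g : X → ℝ) : ℝ :=
  (∑ x, g x) / (Fintype.card X)

/-- A measure on `X`: nonnegative with expectation at most 1. -/
def IsMeasure (X : Type) [Fintype X] (g : X → ℝ) : Prop :=
  (∀ x, 0 ≤ g x) ∧ ex X g ≤ 1

/-- `F^k`: all products of at least one and at most `k` functions from `F`. -/
def FPow {X : Type} (F : Set (X → ℝ)) (k : ℕ) : Set (X → ℝ) :=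
  {φ | ∃ l : List (X → ℝ), l ≠ [] ∧ l.length ≤ k ∧ (∀ f ∈ l, f ∈ F) ∧
        φ = fun x => (l.map (fun f => f x)).prod}

open Finset

section Aux
set_option linter.unusedSectionVars false
variable {X : Type} [Fintype X] [Nonempty X]

lemma cardX_pos : (0:ℝ) < (Fintype.card X : ℝ) := by
  exact_mod_cast Fintype.card_pos

lemma ip_sum_right {ι : Type*} (h : X → ℝ) (s : Finset ι) (ψ : ι → X → ℝ) :
    ip X h (fun x => ∑ w ∈ s, ψ w x) = ∑ w ∈ s, ip X h (ψ w) := by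
  simp only [ip, Finset.mul_sum, ← Finset.sum_div]
  rw [Finset.sum_comm]

lemma ip_smul_right (h : X → ℝ) (c : ℝ) (ψ : X → ℝ) :
    ip X h (fun x => c * ψ x) = c * ip X h ψ := by
  have e : ∑ x, h x * (c * ψ x) = c * ∑ x, h x * ψ x := by
    rw [Finset.mul_sum]; exact Finset.sum_congr rfl (fun x _ => by ring)
  rw [ip, e, ip, mul_div_assoc]

lemma ip_const_right (h : X → ℝ) (c : ℝ) :
    ip X h (fun _ => c) = c * ex X h := by
  have e : ∑ x, h x * c = c * ∑ x, h x := by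
    rw [Finset.mul_sum]; exact Finset.sum_congr rfl (fun x _ => by ring)
  rw [ip, e, ex, mul_div_assoc]

lemma abs_ip_le (h ψ : X → ℝ) (C : ℝ) (hb : ∀ x, |h x * ψ x| ≤ C) :
    |ip X h ψ| ≤ C := by
  have hN := cardX_pos (X := X)
  have h1 : |∑ x, h x * ψ x| ≤ (Fintype.card X : ℝ) * C := by
    calc |∑ x, h x * ψ x| ≤ ∑ x, |h x * ψ x| := Finset.abs_sum_le_sum_abs _ _
    _ ≤ ∑ _x : X, C := Finset.sum_le_sum (fun x _ => hb x)
    _ = (Fintype.card X : ℝ) * C := by simp [Finset.sum_const, nsmul_eq_mul]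
  rw [ip, abs_div, abs_of_pos hN, div_le_iff₀ hN]
  linarith

lemma ex_nonneg (g : X → ℝ) (hg : ∀ x, 0 ≤ g x) : 0 ≤ ex X g := by
  apply div_nonneg (Finset.sum_nonneg (fun x _ => hg x)) (cardX_pos (X := X)).le

lemma ex_le_ex {a b : X → ℝ} (h : ∀ x, a x ≤ b x) : ex X a ≤ ex X b := by
  exact div_le_div_of_nonneg_right (Finset.sum_le_sum (fun x _ => h x)) (cardX_pos (X := X)).le |>.trans_eq rfl

end Aux

lemma key_pow_bound {X : Type} [Fintype X] [Nonempty X] (F : Finset (X → ℝ))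
    (b : ↥F → ℝ) (hb : ∑ i, |b i| = 1)
    (ν : X → ℝ) (k : ℕ) (ε' : ℝ)
    (hν : ∀ f ∈ FPow (↑F : Set (X → ℝ)) k, |ip X (fun x => ν x - 1) f| ≤ ε')
    (j : ℕ) (hj1 : 1 ≤ j) (hjk : j ≤ k) :
    |ip X (fun x => ν x - 1) (fun x => (∑ i, b i * (i : X → ℝ) x) ^ j)| ≤ ε' := by
  have expand : (fun x => (∑ i, b i * (i : X → ℝ) x) ^ j)
      = fun x => ∑ w ∈ (Finset.univ : Finset (Fin j → ↥F)),
          (∏ i, b (w i)) * ∏ i, (w i : X → ℝ) x := by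
    funext x
    rw [Fintype.sum_pow]
    exact Finset.sum_congr rfl (fun w _ => by rw [← Finset.prod_mul_distrib])
  rw [expand, ip_sum_right]
  have hterm : ∀ w : Fin j → ↥F,
      |ip X (fun x => ν x - 1) (fun x => (∏ i, b (w i)) * ∏ i, (w i : X → ℝ) x)|
        ≤ (∏ i, |b (w i)|) * ε' := by
    intro w
    rw [ip_smul_right, abs_mul, Finset.abs_prod]
    refine mul_le_mul_of_nonneg_left ?_ (Finset.prod_nonneg (fun i _ => abs_nonneg _))
    apply hν
    refine ⟨List.ofFn (fun i => ((w i : X → ℝ))), ?_, ?_, ?_, ?_⟩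
    · simp [List.ofFn_eq_nil_iff]; omega
    · simp [hjk]
    · intro f hf
      rw [List.mem_ofFn] at hf
      obtain ⟨i, rfl⟩ := hf
      exact (w i).2
    · funext x
      rw [List.map_ofFn, List.prod_ofFn]
      rfl
  calc |∑ w : Fin j → ↥F, ip X (fun x => ν x - 1)
          (fun x => (∏ i, b (w i)) * ∏ i, (w i : X → ℝ) x)|
      ≤ ∑ w : Fin j → ↥F, |ip X (fun x => ν x - 1)
          (fun x => (∏ i, b (w i)) * ∏ i, (w i : X → ℝ) x)| := Finset.abs_sum_le_sum_abs _ _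
    _ ≤ ∑ w : Fin j → ↥F, (∏ i, |b (w i)|) * ε' :=
        Finset.sum_le_sum (fun w _ => hterm w)
    _ = (∑ w : Fin j → ↥F, ∏ i, |b (w i)|) * ε' := by rw [Finset.sum_mul]
    _ = ((∑ i, |b i|) ^ j) * ε' := by rw [Fintype.sum_pow]
    _ = ε' := by rw [hb, one_pow, one_mul]

lemma exists_threshold {X : Type} [Fintype X] [Nonempty X] (φ : X → ℝ)
    (hφ : ∀ x, |φ x| ≤ 1) (δ : ℝ) (hδ0 : 0 ≤ δ) (hδ1 : δ ≤ 1) :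
    ∃ (t : ℝ) (h : X → ℝ), -1 ≤ t ∧ t ≤ 1 ∧ (∀ x, 0 ≤ h x ∧ h x ≤ 1) ∧ ex X h = δ ∧
      (∀ x, h x * (φ x - t) = max (φ x - t) 0) := by
  classical
  set N : ℝ := (Fintype.card X : ℝ) with hN
  have hN0 : 0 < N := cardX_pos
  set m : ℝ := δ * N with hm
  have hm0 : 0 ≤ m := mul_nonneg hδ0 hN0.le
  have hmN : m ≤ N := by
    calc m = δ * N := rfl
    _ ≤ 1 * N := by apply mul_le_mul_of_nonneg_right hδ1 hN0.le
    _ = N := one_mul N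
  set V : Finset ℝ := Finset.image φ Finset.univ with hV
  have hVne : V.Nonempty := ⟨φ (Classical.arbitrary X), Finset.mem_image_of_mem φ (Finset.mem_univ _)⟩
  set A : ℝ → Finset X := fun s => Finset.univ.filter (fun x => s < φ x) with hA
  set W : Finset ℝ := V.filter (fun v => ((A v).card : ℝ) ≤ m) with hW
  have hWne : W.Nonempty := by
    refine ⟨V.max' hVne, Finset.mem_filter.mpr ⟨V.max'_mem hVne, ?_⟩⟩
    have : A (V.max' hVne) = ∅ := by
      apply Finset.filter_eq_empty_iff.mpr
      intro x _
      simp only [not_lt]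
      exact Finset.le_max' V (φ x) (Finset.mem_image_of_mem φ (Finset.mem_univ _))
    rw [this]; simpa using hm0
  set t : ℝ := W.min' hWne with ht
  have htW : t ∈ W := W.min'_mem hWne
  have htV : t ∈ V := Finset.mem_filter.mp htW |>.1
  obtain ⟨x₀, -, hx₀⟩ := Finset.mem_image.mp htV
  have ht1 : -1 ≤ t := by have := hφ x₀; rw [abs_le] at this; linarith [this.1, hx₀ ▸ this.1]
  have ht2 : t ≤ 1 := by have := hφ x₀; rw [abs_le] at this; rw [← hx₀]; exact this.2
  have hc1 : ((A t).card : ℝ) ≤ m := (Finset.mem_filter.mp htW).2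
  -- the key counting bound
  have hge : m ≤ ((Finset.univ.filter (fun x => t ≤ φ x)).card : ℝ) := by
    by_cases hall : ∀ x, t ≤ φ x
    · have : Finset.univ.filter (fun x => t ≤ φ x) = Finset.univ := by
        apply Finset.filter_true_of_mem; intro x _; exact hall x
      rw [this]; simpa using hmN
    · push_neg at hall
      obtain ⟨y₀, hy₀⟩ := hall
      set V' : Finset ℝ := V.filter (fun v => v < t) with hV'
      have hV'ne : V'.Nonempty :=
        ⟨φ y₀, Finset.mem_filter.mpr ⟨Finset.mem_image_of_mem φ (Finset.mem_univ _), by linarith⟩⟩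
      set t' : ℝ := V'.max' hV'ne with ht'
      have ht'mem : t' ∈ V' := V'.max'_mem hV'ne
      have ht'V : t' ∈ V := (Finset.mem_filter.mp ht'mem).1
      have ht'lt : t' < t := (Finset.mem_filter.mp ht'mem).2
      have ht'W : t' ∉ W := fun hmem => absurd (W.min'_le t' hmem) (by rw [← ht]; linarith)
      have hbig : m < ((A t').card : ℝ) := by
        by_contra hle
        exact ht'W (Finset.mem_filter.mpr ⟨ht'V, by linarith [not_lt.mp hle]⟩)
      have hsub : A t' ⊆ Finset.univ.filter (fun x => t ≤ φ x) := by
        intro x hx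
        have hx' : t' < φ x := (Finset.mem_filter.mp hx).2
        refine Finset.mem_filter.mpr ⟨Finset.mem_univ _, ?_⟩
        by_contra hlt
        push_neg at hlt
        have : φ x ∈ V' := Finset.mem_filter.mpr
          ⟨Finset.mem_image_of_mem φ (Finset.mem_univ _), hlt⟩
        exact absurd (V'.le_max' _ this) (by push_neg; rw [← ht']; exact hx')
      calc m ≤ ((A t').card : ℝ) := hbig.le
      _ ≤ _ := by exact_mod_cast Nat.cast_le.mpr (Finset.card_le_card hsub)
  set E : Finset X := Finset.univ.filter (fun x => φ x = t) with hE
  have hcardsplit : (Finset.univ.filter (fun x => t ≤ φ x)).card = (A t).card + E.card := by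
    have hsplit : Finset.univ.filter (fun x => t ≤ φ x) = A t ∪ E := by
      ext x
      simp only [hA, hE, Finset.mem_filter, Finset.mem_union, Finset.mem_univ, true_and]
      constructor
      · intro hle
        rcases lt_or_eq_of_le hle with h | h
        · exact Or.inl h
        · exact Or.inr h.symm
      · rintro (h | h)
        · exact h.le
        · exact h.ge
    rw [hsplit, Finset.card_union_of_disjoint]
    rw [Finset.disjoint_filter]
    intro x _ hlt heq
    exact absurd heq (by rw [heq] at hlt ⊢; exact absurd hlt (lt_irrefl t))
  set c : ℝ := if E.card = 0 then 0 else (m - (A t).card) / (E.card : ℝ) with hc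
  have hge' : m ≤ ((A t).card : ℝ) + (E.card : ℝ) := by
    rw [hcardsplit] at hge; push_cast at hge; linarith
  have hc0 : 0 ≤ c := by
    rw [hc]; split
    · exact le_refl 0
    · rename_i hEne
      apply div_nonneg (by linarith) (by positivity)
  have hc1' : c ≤ 1 := by
    rw [hc]; split
    · exact zero_le_one
    · rename_i hEne
      have hEpos : (0:ℝ) < (E.card : ℝ) := by
        have : 0 < E.card := Nat.pos_of_ne_zero hEne
        exact_mod_cast this
      rw [div_le_one hEpos]; linarith
  set h : X → ℝ := fun x => if t < φ x then 1 else if φ x = t then c else 0 with hh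
  have hsum : ∑ x, h x = m := by
    have hpt : ∀ x, h x = (if t < φ x then (1:ℝ) else 0) + (if φ x = t then c else 0) := by
      intro x
      rw [hh]
      by_cases h1 : t < φ x
      · have h2 : φ x ≠ t := ne_of_gt h1
        simp [h1, h2]
      · simp [h1]
    calc ∑ x, h x = ∑ x, ((if t < φ x then (1:ℝ) else 0) + (if φ x = t then c else 0)) :=
          Finset.sum_congr rfl (fun x _ => hpt x)
    _ = ((A t).card : ℝ) + (E.card : ℝ) * c := by
        rw [Finset.sum_add_distrib]
        congr 1
        · rw [← Finset.sum_filter]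
          simp [hA]
        · rw [← Finset.sum_filter]
          rw [Finset.sum_const]
          simp [hE, mul_comm]
    _ = m := by
        by_cases hEz : E.card = 0
        · have hmc : m = ((A t).card : ℝ) := by
            rw [hEz] at hge'; push_cast at hge'; linarith
          have hcz : c = 0 := by rw [hc, if_pos hEz]
          rw [hcz, hEz, hmc]
          push_cast
          ring
        · have hEpos : (0:ℝ) < (E.card : ℝ) := by
            have : 0 < E.card := Nat.pos_of_ne_zero hEz
            exact_mod_cast this
          have : (E.card : ℝ) * ((m - ((A t).card : ℝ)) / (E.card : ℝ)) = m - ((A t).card : ℝ) := by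
            rw [mul_comm, div_mul_cancel₀ _ (ne_of_gt hEpos)]
          rw [hc, if_neg hEz, this]
          ring
  refine ⟨t, h, ht1, ht2, ?_, ?_, ?_⟩
  · intro x
    rw [hh]
    by_cases h1 : t < φ x
    · simp [h1]
    · by_cases h2 : φ x = t
      · simp [h1, h2, hc0, hc1']
      · simp [h1, h2]
  · rw [ex, ← hN, hsum, hm]
    exact mul_div_cancel_right₀ δ (ne_of_gt hN0)
  · intro x
    rw [hh]
    by_cases h1 : t < φ x
    · simp only [h1, if_true, one_mul]
      rw [max_eq_left (by linarith)]
    · by_cases h2 : φ x = t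
      · simp [h1, h2]
      · simp only [h1, if_false, h2, zero_mul]
        rw [max_eq_right]
        push_neg at h1
        rcases lt_or_eq_of_le h1 with h3 | h3
        · linarith
        · exact absurd h3 h2

lemma sw_relu (τ η : ℝ) (hη : 0 < η) :
    ∃ p : Polynomial ℝ, ∀ y ∈ Set.Icc (-1:ℝ) 1, |p.eval y - max (y - τ) 0| ≤ η := by
  set G : C(Set.Icc (-1:ℝ) 1, ℝ) :=
    ⟨fun y => max ((y:ℝ) - τ) 0, by
      apply Continuous.max
      · exact (continuous_subtype_val).sub continuous_const
      · exact continuous_const⟩ with hG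
  obtain ⟨p, hp⟩ := exists_polynomial_near_continuousMap (-1) 1 G η hη
  refine ⟨p, fun y hy => ?_⟩
  have h2 := ContinuousMap.norm_coe_le_norm (p.toContinuousMapOn _ - G) ⟨y, hy⟩
  have h3 : (p.toContinuousMapOn (Set.Icc (-1:ℝ) 1) - G) ⟨y, hy⟩
      = p.eval y - max (y - τ) 0 := by
    simp [hG, Polynomial.toContinuousMapOn, Polynomial.toContinuousMap]
  rw [h3] at h2
  calc |p.eval y - max (y - τ) 0| ≤ ‖p.toContinuousMapOn _ - G‖ := h2
  _ ≤ η := hp.le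

lemma exists_uniform_relu_approx (η : ℝ) (hη : 0 < η) :
    ∃ (k : ℕ) (B : ℝ), 0 < B ∧ ∀ t : ℝ, -1 ≤ t → t ≤ 1 → ∃ p : Polynomial ℝ,
      p.natDegree ≤ k ∧ (∑ j ∈ Finset.range (k+1), |p.coeff j|) ≤ B ∧
      ∀ y : ℝ, -1 ≤ y → y ≤ 1 → |p.eval y - max (y - t) 0| ≤ η := by
  classical
  choose P hP using fun τ : ℝ => sw_relu τ (η/2) (by linarith)
  set M : ℕ := ⌈(4:ℝ)/η⌉₊ with hM
  have hM4 : (4:ℝ)/η ≤ (M:ℝ) := Nat.le_ceil _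
  have hM0 : (0:ℝ) < (M:ℝ) := lt_of_lt_of_le (by positivity) hM4
  set T : Finset ℝ := (Finset.range (M+1)).image (fun i : ℕ => -1 + (i:ℝ) * (2 / (M:ℝ))) with hT
  have hTne : T.Nonempty := by
    refine ⟨_, Finset.mem_image.mpr ⟨0, by simp, rfl⟩⟩
  set k : ℕ := T.sup (fun τ => (P τ).natDegree) with hk
  set B : ℝ := (T.sup' hTne (fun τ => ∑ j ∈ Finset.range (k+1), |(P τ).coeff j|)) + 1 with hB
  have hBpos : 0 < B := by
    rw [hB]
    have h0 : (0:ℝ) ≤ T.sup' hTne (fun τ => ∑ j ∈ Finset.range (k+1), |(P τ).coeff j|) := by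
      obtain ⟨τ₀, hτ₀⟩ := hTne
      calc (0:ℝ) ≤ ∑ j ∈ Finset.range (k+1), |(P τ₀).coeff j| :=
            Finset.sum_nonneg (fun j _ => abs_nonneg _)
      _ ≤ _ := Finset.le_sup' (fun τ => ∑ j ∈ Finset.range (k+1), |(P τ).coeff j|) hτ₀
    linarith
  refine ⟨k, B, hBpos, ?_⟩
  intro t ht1 ht2
  set z : ℝ := (t+1) * (M:ℝ) / 2 with hz
  set i : ℕ := ⌊z⌋₊ with hi
  have hz0 : 0 ≤ z := by rw [hz]; have : 0 ≤ t + 1 := by linarith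
                         positivity
  have hzM : z ≤ (M:ℝ) := by
    rw [hz]
    rw [div_le_iff₀ (by norm_num : (0:ℝ) < 2)]
    nlinarith
  have hiM : i ≤ M := by
    rw [hi]
    exact Nat.floor_le_of_le hzM |>.trans (by simp)
  set τ : ℝ := -1 + (i:ℝ) * (2 / (M:ℝ)) with hτ
  have hτT : τ ∈ T := by
    rw [hτ, hT]
    exact Finset.mem_image_of_mem (fun j : ℕ => -1 + (j:ℝ) * (2 / (M:ℝ)))
      (Finset.mem_range.mpr (Nat.lt_succ_of_le hiM))
  have hfl1 : (i:ℝ) ≤ z := Nat.floor_le hz0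
  have hfl2 : z < (i:ℝ) + 1 := Nat.lt_floor_add_one z
  have hdist : |t - τ| ≤ η / 2 := by
    have h2M : 2 / (M:ℝ) ≤ η / 2 := by
      have he : η * ((4:ℝ)/η) = 4 := by field_simp
      have h4 : (4:ℝ) ≤ η * (M:ℝ) := by
        have := mul_le_mul_of_nonneg_left hM4 hη.le
        linarith
      rw [div_le_div_iff₀ hM0 (by norm_num : (0:ℝ) < 2)]
      linarith
    have ht_eq : t - τ = (2 / (M:ℝ)) * (z - (i:ℝ)) := by
      rw [hτ, hz]
      field_simp
      ring
    have hnn : 0 ≤ (2 / (M:ℝ)) * (z - (i:ℝ)) := by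
      apply mul_nonneg (by positivity) (by linarith)
    rw [ht_eq, abs_of_nonneg hnn]
    calc (2 / (M:ℝ)) * (z - (i:ℝ)) ≤ (2 / (M:ℝ)) * 1 := by
          apply mul_le_mul_of_nonneg_left (by linarith) (by positivity)
    _ = 2 / (M:ℝ) := mul_one _
    _ ≤ η / 2 := h2M
  refine ⟨P τ, Finset.le_sup (f := fun τ => (P τ).natDegree) hτT, ?_, ?_⟩
  · exact (Finset.le_sup' (fun τ => ∑ j ∈ Finset.range (k+1), |(P τ).coeff j|) hτT).trans
      (by rw [hB]; linarith)
  · intro y hy1 hy2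
    have h1 := hP τ y ⟨hy1, hy2⟩
    have h2 : |max (y - τ) 0 - max (y - t) 0| ≤ |t - τ| := by
      have := abs_max_sub_max_le_max (y - τ) 0 (y - t) 0
      simp only [sub_self, abs_zero] at this
      calc |max (y - τ) 0 - max (y - t) 0| ≤ max |y - τ - (y - t)| 0 := this
      _ = |t - τ| := by rw [max_eq_left (abs_nonneg _)]; congr 1; ring
    calc |Polynomial.eval y (P τ) - max (y - t) 0|
        = |(Polynomial.eval y (P τ) - max (y - τ) 0) + (max (y - τ) 0 - max (y - t) 0)| := by
          congr 1; ring
    _ ≤ |Polynomial.eval y (P τ) - max (y - τ) 0| + |max (y - τ) 0 - max (y - t) 0| := abs_add_le _ _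
    _ ≤ η / 2 + η / 2 := add_le_add h1 (h2.trans hdist)
    _ = η := by ring

open scoped Pointwise

section Sep
set_option linter.unusedSectionVars false
variable {X : Type} [Fintype X] [Nonempty X]

lemma ip_add_left (a b ψ : X → ℝ) :
    ip X (fun x => a x + b x) ψ = ip X a ψ + ip X b ψ := by
  rw [ip, ip, ip, ← add_div]
  congr 1
  rw [← Finset.sum_add_distrib]
  exact Finset.sum_congr rfl (fun x _ => by ring)

lemma ip_sub_left (a b ψ : X → ℝ) :
    ip X (fun x => a x - b x) ψ = ip X a ψ - ip X b ψ := by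
  rw [ip, ip, ip, div_sub_div_same]
  congr 1
  rw [← Finset.sum_sub_distrib]
  exact Finset.sum_congr rfl (fun x _ => by ring)

lemma ip_smul_left (c : ℝ) (a ψ : X → ℝ) :
    ip X (fun x => c * a x) ψ = c * ip X a ψ := by
  rw [ip, ip, ← mul_div_assoc, Finset.mul_sum]
  congr 1
  exact Finset.sum_congr rfl (fun x _ => by ring)

lemma ex_const (c : ℝ) : ex X (fun _ : X => c) = c := by
  rw [ex, Finset.sum_const, nsmul_eq_mul, Finset.card_univ]
  exact mul_div_cancel_left₀ c (ne_of_gt (cardX_pos (X := X)))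

lemma ex_comb (a b : ℝ) (p q : X → ℝ) :
    ex X (fun x => a * p x + b * q x) = a * ex X p + b * ex X q := by
  rw [ex, ex, ex, ← mul_div_assoc, ← mul_div_assoc, ← add_div]
  congr 1
  rw [Finset.mul_sum, Finset.mul_sum, ← Finset.sum_add_distrib]

lemma separation (F : Finset (X → ℝ)) (g : X → ℝ)
    (δ ε : ℝ) (hε : 0 < ε) (hδ0 : 0 ≤ δ) (hδ1 : δ ≤ 1) :
    (∃ h : X → ℝ, (∀ x, 0 ≤ h x ∧ h x ≤ 1) ∧ ex X h = δ ∧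
        ∀ f ∈ F, |ip X g f - ip X h f| ≤ ε) ∨
    (∃ b : ↥F → ℝ, (∑ i, |b i|) = 1 ∧
        ∀ h : X → ℝ, (∀ x, 0 ≤ h x ∧ h x ≤ 1) → ex X h = δ →
          ip X h (fun x => ∑ i, b i * (i : X → ℝ) x) + ε
            < ip X g (fun x => ∑ i, b i * (i : X → ℝ) x)) := by
  classical
  set K : Set (X → ℝ) := {h | (∀ x, 0 ≤ h x ∧ h x ≤ 1) ∧ ex X h = δ} with hK
  have hKconst : (fun _ : X => δ) ∈ K := ⟨fun x => ⟨hδ0, hδ1⟩, ex_const δ⟩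
  have hKconv : Convex ℝ K := by
    rintro p ⟨hp1, hp2⟩ q ⟨hq1, hq2⟩ a b ha hb hab
    constructor
    · intro x
      have := hp1 x; have := hq1 x
      constructor
      · have : (a • p + b • q) x = a * p x + b * q x := rfl
        rw [this]; nlinarith [(hp1 x).1, (hq1 x).1]
      · have : (a • p + b • q) x = a * p x + b * q x := rfl
        rw [this]; nlinarith [(hp1 x).2, (hq1 x).2]
    · have : (a • p + b • q) = fun x => a * p x + b * q x := rfl
      rw [this, ex_comb, hp2, hq2]
      nlinarith
  have hKclosed : IsClosed K := by
    have : K = (⋂ x, (fun h : X → ℝ => h x) ⁻¹' (Set.Icc 0 1)) ∩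
        ((fun h : X → ℝ => ex X h) ⁻¹' {δ}) := by
      ext h
      simp only [hK, Set.mem_setOf_eq, Set.mem_inter_iff, Set.mem_iInter, Set.mem_preimage,
        Set.mem_Icc, Set.mem_singleton_iff]
    rw [this]
    refine IsClosed.inter (isClosed_iInter (fun x => ?_)) ?_
    · exact IsClosed.preimage (continuous_apply x) isClosed_Icc
    · refine IsClosed.preimage ?_ isClosed_singleton
      have : (fun h : X → ℝ => ex X h)
          = fun h : X → ℝ => (∑ x, h x) / (Fintype.card X : ℝ) := rfl
      rw [this]
      exact (continuous_finset_sum _ (fun x _ => continuous_apply x)).div_const _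
  have hKcompact : IsCompact K := by
    refine IsCompact.of_isClosed_subset (isCompact_closedBall (0 : X → ℝ) 1) hKclosed ?_
    intro h hh
    rw [Metric.mem_closedBall, dist_zero_right]
    rw [pi_norm_le_iff_of_nonneg (by norm_num : (0:ℝ) ≤ 1)]
    intro x
    rw [Real.norm_eq_abs, abs_le]
    exact ⟨by linarith [(hh.1 x).1], (hh.1 x).2⟩
  set L : (X → ℝ) →ₗ[ℝ] (↥F → ℝ) :=
    { toFun := fun h i => ip X h (i : X → ℝ)
      map_add' := by
        intro p q; funext i
        have : (p + q) = fun x => p x + q x := rfl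
        rw [this]; exact ip_add_left p q _
      map_smul' := by
        intro c p; funext i
        have : (c • p) = fun x => c * p x := rfl
        rw [this]
        simp only [RingHom.id_apply, Pi.smul_apply, smul_eq_mul]
        exact ip_smul_left c p _ } with hL
  set Lc : (X → ℝ) →L[ℝ] (↥F → ℝ) := LinearMap.toContinuousLinearMap L with hLc
  set S : Set (↥F → ℝ) := (⇑Lc '' K) + Metric.closedBall (0 : ↥F → ℝ) ε with hS
  have hLcL : ⇑Lc = ⇑L := LinearMap.coe_toContinuousLinearMap' L
  have hSconv : Convex ℝ S := by
    rw [hS, hLcL]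
    exact Convex.add (hKconv.linear_image L) (convex_closedBall _ _)
  have hSclosed : IsClosed S := by
    rw [hS]
    exact ((hKcompact.image Lc.continuous).add (isCompact_closedBall _ _)).isClosed
  by_cases hmem : Lc g ∈ S
  · left
    rw [hS] at hmem
    obtain ⟨y, hy, z, hz, hsum⟩ := Set.mem_add.mp hmem
    obtain ⟨h, hhK, rfl⟩ := hy
    refine ⟨h, hhK.1, hhK.2, fun f hf => ?_⟩
    have hzi : |z ⟨f, hf⟩| ≤ ε := by
      have h1 : ‖z‖ ≤ ε := mem_closedBall_zero_iff.mp hz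
      have h2 := norm_le_pi_norm z ⟨f, hf⟩
      rw [Real.norm_eq_abs] at h2
      linarith
    have heq : ip X g f - ip X h f = z ⟨f, hf⟩ := by
      have := congrFun hsum ⟨f, hf⟩
      have hLg : Lc g ⟨f, hf⟩ = ip X g f := rfl
      have hLh : Lc h ⟨f, hf⟩ = ip X h f := rfl
      simp only [Pi.add_apply] at this
      rw [hLg] at this; rw [hLh] at this
      linarith
    rw [heq]; exact hzi
  · right
    obtain ⟨Φ, u, hSu, hgu⟩ := geometric_hahn_banach_closed_point hSconv hSclosed hmem
    set a : ↥F → ℝ := fun i => Φ (fun j => if i = j then 1 else 0) with ha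
    have hrep : ∀ y : ↥F → ℝ, Φ y = ∑ i, y i * a i := by
      intro y
      conv_lhs => rw [pi_eq_sum_univ y]
      rw [map_sum]
      exact Finset.sum_congr rfl (fun i _ => by rw [map_smul, smul_eq_mul])
    set s : ℝ := ∑ i, |a i| with hs
    have hs0 : 0 ≤ s := Finset.sum_nonneg (fun i _ => abs_nonneg _)
    have hspos : 0 < s := by
      rcases lt_or_eq_of_le hs0 with h | h
      · exact h
      · exfalso
        have hzero : ∀ i, a i = 0 := by
          intro i
          have := Finset.sum_eq_zero_iff_of_nonneg (fun i (_ : i ∈ Finset.univ) => abs_nonneg (a i))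
          rw [← hs, ← h] at this
          exact abs_eq_zero.mp (this.mp rfl i (Finset.mem_univ i))
        have hPhi0 : ∀ y, Φ y = 0 := by
          intro y; rw [hrep y]
          exact Finset.sum_eq_zero (fun i _ => by rw [hzero i, mul_zero])
        have helem : Lc (fun _ : X => δ) + 0 ∈ S := by
          rw [hS]
          exact Set.add_mem_add (Set.mem_image_of_mem _ hKconst)
            (Metric.mem_closedBall_self hε.le)
        have h1 := hSu _ helem
        rw [hPhi0] at h1
        rw [hPhi0] at hgu
        linarith
    set b : ↥F → ℝ := fun i => a i / s with hb
    have hbsum : ∑ i, |b i| = 1 := by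
      rw [hb]
      simp only [abs_div, abs_of_pos hspos]
      rw [← Finset.sum_div, ← hs, div_self (ne_of_gt hspos)]
    refine ⟨b, hbsum, ?_⟩
    intro h hh1 hh2
    have hhK : h ∈ K := ⟨hh1, hh2⟩
    set σ : ↥F → ℝ := fun i => if 0 ≤ a i then 1 else -1 with hσ
    have hσball : ε • σ ∈ Metric.closedBall (0 : ↥F → ℝ) ε := by
      rw [mem_closedBall_zero_iff]
      rw [pi_norm_le_iff_of_nonneg hε.le]
      intro i
      rw [Pi.smul_apply, smul_eq_mul, Real.norm_eq_abs, abs_mul, abs_of_pos hε, hσ]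
      by_cases hi : 0 ≤ a i <;> simp [hi]
    have helem : Lc h + ε • σ ∈ S := by
      rw [hS]
      exact Set.add_mem_add (Set.mem_image_of_mem _ hhK) hσball
    have hΦσ : Φ σ = s := by
      rw [hrep σ, hs]
      refine Finset.sum_congr rfl (fun i _ => ?_)
      rw [hσ]
      by_cases hi : 0 ≤ a i
      · simp only [hi, if_true, one_mul]
        exact (abs_of_nonneg hi).symm
      · simp only [hi, if_false]
        push_neg at hi
        rw [abs_of_neg hi]; ring
    have hLφ : ∀ w : X → ℝ, Φ (Lc w) = s * ip X w (fun x => ∑ i, b i * (i : X → ℝ) x) := by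
      intro w
      rw [hrep (Lc w)]
      rw [ip_sum_right w Finset.univ (fun i x => b i * (i : X → ℝ) x)]
      rw [Finset.mul_sum]
      refine Finset.sum_congr rfl (fun i _ => ?_)
      have h1 : Lc w i = ip X w (i : X → ℝ) := rfl
      rw [h1, ip_smul_right w (b i) ((i : X → ℝ))]
      rw [hb]
      field_simp
    have hlt := hSu _ helem
    rw [map_add, map_smul, smul_eq_mul, hΦσ, hLφ h] at hlt
    have hgt := hgu
    rw [hLφ g] at hgt
    have hcomb : s * ip X h (fun x => ∑ i, b i * (i : X → ℝ) x) + ε * s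
        < s * ip X g (fun x => ∑ i, b i * (i : X → ℝ) x) := lt_trans hlt hgt
    have h2 : s * (ip X h (fun x => ∑ i, b i * (i : X → ℝ) x) + ε)
        < s * ip X g (fun x => ∑ i, b i * (i : X → ℝ) x) := by
      rw [mul_add]
      linarith [hcomb]
    exact (mul_lt_mul_iff_right₀ hspos).mp h2
end Sep

lemma ip_eq_ex {X : Type} [Fintype X] (w ψ : X → ℝ) :
    ip X w ψ = ex X (fun x => w x * ψ x) := rfl

lemma ex_sub_one {X : Type} [Fintype X] [Nonempty X] (ν : X → ℝ) :
    ex X (fun x => ν x - 1) = ex X ν - 1 := by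
  rw [ex, ex, Finset.sum_sub_distrib, sub_div]
  congr 1
  rw [Finset.sum_const, nsmul_eq_mul, mul_one, Finset.card_univ]
  exact div_self (ne_of_gt (cardX_pos (X := X)))

/-- Green–Tao–Ziegler dense model theorem, decomposition form: `g = g₁ + g₂`
where `g₁` is a bounded measure with the same expectation as `g`, and `g₂`
is nearly orthogonal to `F`. -/
theorem dense_model_decomposition :
    ∀ ε : ℝ, 0 < ε →
      ∃ (k : ℕ) (ε' : ℝ), 0 < ε' ∧
        ∀ (X : Type) [Fintype X] [Nonempty X] (F : Finset (X → ℝ)),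
          (∀ f ∈ F, ∀ x, f x ∈ Set.Icc (-1 : ℝ) 1) →
          ∀ ν : X → ℝ, IsMeasure X ν →
            (∀ f ∈ FPow (↑F : Set (X → ℝ)) k, |ip X (fun x => ν x - 1) f| ≤ ε') →
            ∀ g : X → ℝ, IsMeasure X g → (∀ x, g x ≤ ν x) →
              ∃ g₁ g₂ : X → ℝ,
                (∀ x, g x = g₁ x + g₂ x) ∧
                IsMeasure X g₁ ∧ (∀ x, 0 ≤ g₁ x ∧ g₁ x ≤ 1) ∧
                ex X g₁ = ex X g ∧
                ∀ f ∈ F, |ip X g₂ f| ≤ ε := by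
  intro ε hε
  obtain ⟨k, B, hB, happrox⟩ := exists_uniform_relu_approx (ε/4) (by linarith)
  refine ⟨k, ε/(8*(B+1)), by positivity, ?_⟩
  intro X _ _ F hF ν hν hps g hg hgν
  have hδ0 : 0 ≤ ex X g := ex_nonneg g hg.1
  have hδ1 : ex X g ≤ 1 := le_trans (ex_le_ex hgν) hν.2
  rcases separation F g (ex X g) ε hε hδ0 hδ1 with ⟨h, hh1, hh2, hh3⟩ | ⟨b, hbsum, hsep⟩
  · refine ⟨h, fun x => g x - h x, fun x => by ring,
      ⟨fun x => (hh1 x).1, by rw [hh2]; exact hδ1⟩, hh1, hh2, fun f hf => ?_⟩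
    rw [ip_sub_left]
    exact hh3 f hf
  · exfalso
    set φ : X → ℝ := fun x => ∑ i, b i * (i : X → ℝ) x with hφdef
    have hφb : ∀ x, |φ x| ≤ 1 := by
      intro x
      rw [hφdef]
      calc |∑ i, b i * (i : X → ℝ) x| ≤ ∑ i, |b i * (i : X → ℝ) x| :=
            Finset.abs_sum_le_sum_abs _ _
      _ ≤ ∑ i : ↥F, |b i| := by
          refine Finset.sum_le_sum (fun i _ => ?_)
          rw [abs_mul]
          have hfx : |(i : X → ℝ) x| ≤ 1 := by
            have := hF (i : X → ℝ) i.2 x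
            rw [Set.mem_Icc] at this
            rw [abs_le]; exact this
          calc |b i| * |(i : X → ℝ) x| ≤ |b i| * 1 :=
                mul_le_mul_of_nonneg_left hfx (abs_nonneg _)
          _ = |b i| := mul_one _
      _ = 1 := hbsum
    obtain ⟨t, h, ht1, ht2, hh01, hhex, hhmax⟩ := exists_threshold φ hφb (ex X g) hδ0 hδ1
    have hsep' : ip X h φ + ε < ip X g φ := hsep h hh01 hhex
    set q : X → ℝ := fun x => max (φ x - t) 0 with hqdef
    have hqx : ∀ x, q x = max (φ x - t) 0 := fun x => rfl
    have hq0 : ∀ x, 0 ≤ q x := fun x => by rw [hqx x]; exact le_max_right _ _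
    -- `ip X h φ = ex q + t * ex g`
    have hiph : ip X h φ = ex X q + t * ex X g := by
      rw [ip_eq_ex]
      have e1 : (fun x => h x * φ x) = fun x => 1 * q x + t * h x := by
        funext x
        rw [one_mul, hqx x, ← hhmax x]
        ring
      rw [e1, ex_comb, one_mul, hhex]
    -- `ip X g φ ≤ t * ex g + ip X ν q`
    have hipg : ip X g φ ≤ t * ex X g + ip X ν q := by
      rw [ip_eq_ex, ip_eq_ex]
      calc ex X (fun x => g x * φ x) ≤ ex X (fun x => 1 * (g x * q x) + t * g x) := by
            refine ex_le_ex (fun x => ?_)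
            rw [one_mul, hqx x]
            have h1 : g x * (φ x - t) ≤ g x * max (φ x - t) 0 :=
              mul_le_mul_of_nonneg_left (le_max_left _ _) (hg.1 x)
            nlinarith [h1]
      _ = ex X (fun x => g x * q x) + t * ex X g := by rw [ex_comb, one_mul]
      _ ≤ ex X (fun x => ν x * q x) + t * ex X g := by
            have := ex_le_ex (X := X) (a := fun x => g x * q x) (b := fun x => ν x * q x)
              (fun x => by
                show g x * q x ≤ ν x * q x
                exact mul_le_mul_of_nonneg_right (hgν x) (hq0 x))
            linarith
      _ = t * ex X g + ex X (fun x => ν x * q x) := by ring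
    have hkey : ex X q + ε < ip X ν q := by
      have h1 := hsep'
      rw [hiph] at h1
      linarith [hipg]
    have hkey2 : ε < ip X (fun x => ν x - 1) q := by
      have e : ip X (fun x => ν x - 1) q = ip X ν q - ex X q := by
        rw [ip, ip, ex, ← sub_div]
        congr 1
        rw [← Finset.sum_sub_distrib]
        exact Finset.sum_congr rfl (fun x _ => by ring)
      rw [e]
      linarith
    -- polynomial approximation
    obtain ⟨p, hdeg, hcoeff, hperr⟩ := happrox t ht1 ht2
    set d : ℕ := p.natDegree with hd
    have hsplit : ip X (fun x => ν x - 1) q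
        = ip X (fun x => ν x - 1) (fun x => q x - p.eval (φ x))
          + ip X (fun x => ν x - 1) (fun x => p.eval (φ x)) := by
      rw [ip, ip, ip, ← add_div]
      congr 1
      rw [← Finset.sum_add_distrib]
      exact Finset.sum_congr rfl (fun x _ => by ring)
    -- error term bound
    have hexν0 : 0 ≤ ex X ν := ex_nonneg ν hν.1
    have herr : ip X (fun x => ν x - 1) (fun x => q x - p.eval (φ x)) ≤ ε/2 := by
      rw [ip_eq_ex]
      have hb1 : ∀ x : X, (ν x - 1) * (q x - p.eval (φ x)) ≤ 1 * ((ε/4) * ν x) + (ε/4) * 1 := by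
        intro x
        have habs : |q x - p.eval (φ x)| ≤ ε/4 := by
          have := hperr (φ x) (by linarith [abs_le.mp (hφb x)]) (by linarith [abs_le.mp (hφb x)])
          rw [hqx x, abs_sub_comm]
          exact this
        have hν1 : |ν x - 1| ≤ ν x + 1 := by
          rw [abs_le]
          constructor <;> nlinarith [hν.1 x]
        calc (ν x - 1) * (q x - p.eval (φ x)) ≤ |(ν x - 1) * (q x - p.eval (φ x))| :=
              le_abs_self _
        _ = |ν x - 1| * |q x - p.eval (φ x)| := abs_mul _ _
        _ ≤ (ν x + 1) * (ε/4) := by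
              apply mul_le_mul hν1 habs (abs_nonneg _)
              nlinarith [hν.1 x]
        _ = 1 * ((ε/4) * ν x) + (ε/4) * 1 := by ring
      calc ex X (fun x => (ν x - 1) * (q x - p.eval (φ x)))
          ≤ ex X (fun x => 1 * ((ε/4) * ν x) + (ε/4) * 1) := ex_le_ex hb1
      _ = 1 * ex X (fun x => (ε/4) * ν x) + (ε/4) * ex X (fun _ => (1:ℝ)) := ex_comb 1 (ε/4) _ _
      _ = (ε/4) * ex X ν + ε/4 := by
            rw [one_mul, ex_const]
            have : ex X (fun x => (ε/4) * ν x) = (ε/4) * ex X ν := by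
              have := ex_comb (X := X) (ε/4) 0 ν (fun _ => (0:ℝ))
              simp only [zero_mul, add_zero, mul_zero] at this
              exact this
            rw [this, mul_one]
      _ ≤ ε/2 := by nlinarith [hν.2, hexν0]
    -- main polynomial term
    have hmain : ip X (fun x => ν x - 1) (fun x => p.eval (φ x)) ≤ ε/4 + B * (ε/(8*(B+1))) := by
      have heval : (fun x => p.eval (φ x))
          = fun x => ∑ j ∈ Finset.range (d+1), p.coeff j * φ x ^ j := by
        funext x
        exact Polynomial.eval_eq_sum_range (φ x)
      rw [heval, ip_sum_right]
      rw [Finset.sum_range_succ']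
      have hterm0 : ip X (fun x => ν x - 1) (fun x => p.coeff 0 * φ x ^ 0) ≤ ε/4 := by
        have e : (fun x => p.coeff 0 * φ x ^ 0) = fun _ : X => p.coeff 0 := by
          funext x; rw [pow_zero, mul_one]
        rw [e, ip_const_right, ex_sub_one]
        have hc0 : -(ε/4) ≤ p.coeff 0 := by
          have := hperr 0 (by norm_num) (by norm_num)
          rw [Polynomial.coeff_zero_eq_eval_zero]
          have hm : 0 ≤ max (0 - t) 0 := le_max_right _ _
          rw [abs_le] at this
          linarith [this.1]
        nlinarith [hν.2, hexν0, hc0]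
      have htermj : ∀ j ∈ Finset.range d,
          ip X (fun x => ν x - 1) (fun x => p.coeff (j+1) * φ x ^ (j+1))
            ≤ |p.coeff (j+1)| * (ε/(8*(B+1))) := by
        intro j hj
        rw [Finset.mem_range] at hj
        rw [ip_smul_right]
        calc p.coeff (j+1) * ip X (fun x => ν x - 1) (fun x => φ x ^ (j+1))
            ≤ |p.coeff (j+1) * ip X (fun x => ν x - 1) (fun x => φ x ^ (j+1))| := le_abs_self _
        _ = |p.coeff (j+1)| * |ip X (fun x => ν x - 1) (fun x => φ x ^ (j+1))| := abs_mul _ _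
        _ ≤ |p.coeff (j+1)| * (ε/(8*(B+1))) := by
            refine mul_le_mul_of_nonneg_left ?_ (abs_nonneg _)
            have := key_pow_bound F b hbsum ν k (ε/(8*(B+1))) hps (j+1) (by omega)
              ((Nat.succ_le_of_lt hj).trans hdeg)
            rw [hφdef]
            exact this
      have hcoefbound : ∑ j ∈ Finset.range d, |p.coeff (j+1)| ≤ B := by
        calc ∑ j ∈ Finset.range d, |p.coeff (j+1)|
            = ∑ j ∈ (Finset.range d).image Nat.succ, |p.coeff j| := by
              rw [Finset.sum_image (fun a _ c _ hac => Nat.succ_injective hac)]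
        _ ≤ ∑ j ∈ Finset.range (k+1), |p.coeff j| := by
              refine Finset.sum_le_sum_of_subset_of_nonneg ?_ (fun _ _ _ => abs_nonneg _)
              intro j hj
              obtain ⟨i, hi, rfl⟩ := Finset.mem_image.mp hj
              rw [Finset.mem_range] at hi ⊢
              have : i + 1 ≤ d := hi
              omega
        _ ≤ B := hcoeff
      have hsum : ∑ j ∈ Finset.range d,
          ip X (fun x => ν x - 1) (fun x => p.coeff (j+1) * φ x ^ (j+1))
            ≤ B * (ε/(8*(B+1))) := by
        calc ∑ j ∈ Finset.range d,
            ip X (fun x => ν x - 1) (fun x => p.coeff (j+1) * φ x ^ (j+1))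
            ≤ ∑ j ∈ Finset.range d, |p.coeff (j+1)| * (ε/(8*(B+1))) :=
              Finset.sum_le_sum htermj
        _ = (∑ j ∈ Finset.range d, |p.coeff (j+1)|) * (ε/(8*(B+1))) :=
              (Finset.sum_mul _ _ _).symm
        _ ≤ B * (ε/(8*(B+1))) := by
              apply mul_le_mul_of_nonneg_right hcoefbound (by positivity)
      linarith [hterm0, hsum]
    have hB8 : B * (ε/(8*(B+1))) ≤ ε/8 := by
      have h1 : (0:ℝ) < 8*(B+1) := by linarith
      have e : B * (ε/(8*(B+1))) = (B*ε)/(8*(B+1)) := by ring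
      rw [e, div_le_div_iff₀ h1 (by norm_num : (0:ℝ) < 8)]
      nlinarith [hε.le, hB]
    rw [hsplit] at hkey2
    linarith [herr, hmain, hB8, hkey2]
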